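/- Let H = {a,b,c,d} with the hyperoperation ∘ of Table 2. Then (c ∘ d) * {b} ≠ (b ∘ d) * {c}; consequently there exist x, y, z ∈ H with (x ∘ y) * {z} ≠ (z ∘ y) * {x}, so H with ∘ is not an LA-hypergroupoid (Example 5 of the commented paper is wrong). -/
import Mathlib

/-- The four-element set `H = {a,b,c,d}` of Table 2. -/
inductive H2 : Type
  | a | b | c | d
  deriving DecidableEq

open H2

/-- The hyperoperation of Table 2. -/
def circ2 : H2 → H2 → Set H2
  | a, _ => {a}
  | b, a => {a}
  | b, b => {a, b, c, d}
  | b, c => {a, b, c}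
  | b, d => {a, b, c}
  | c, a => {a}
  | c, b => {a, b, c}
  | c, c => {a, b, c}
  | c, d => {a, b, c}
  | d, a => {a}
  | d, b => {a, b, c}
  | d, c => {a, b, c}
  | d, d => {a, b, c}

/-- The operation on nonempty subsets induced by the hyperoperation. -/
def inducedStar {H : Type*} (circ : H → H → Set H) (A B : Set H) : Set H :=
  ⋃ x ∈ A, ⋃ y ∈ B, circ x y

/-- An LA-hypergroupoid: `(x ∘ y) * {z} = (z ∘ y) * {x}` for all `x y z`. -/
def IsLAHypergroupoid {H : Type*} (circ : H → H → Set H) : Prop :=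
  ∀ x y z : H, inducedStar circ (circ x y) {z} = inducedStar circ (circ z y) {x}

lemma key : inducedStar circ2 (circ2 c d) {b} ≠ inducedStar circ2 (circ2 b d) {c} := by
  intro h
  have hd : d ∈ inducedStar circ2 (circ2 c d) {b} := by
    simp only [inducedStar, Set.mem_iUnion]
    exact ⟨b, by simp [circ2], b, rfl, by simp [circ2]⟩
  rw [h] at hd
  simp only [inducedStar, Set.mem_iUnion] at hd
  obtain ⟨x, hx, y, hy, hxy⟩ := hd
  simp only [Set.mem_singleton_iff] at hy
  subst hy
  cases x <;> simp_all [circ2]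

/-- In Table 2, `(c ∘ d) * {b} ≠ (b ∘ d) * {c}`; hence there exist `x y z` with
`(x ∘ y) * {z} ≠ (z ∘ y) * {x}`, so `H` with `∘` is not an LA-hypergroupoid. -/
theorem table2_not_LA :
    inducedStar circ2 (circ2 c d) {b} ≠ inducedStar circ2 (circ2 b d) {c} ∧
    (∃ x y z : H2,
      inducedStar circ2 (circ2 x y) {z} ≠ inducedStar circ2 (circ2 z y) {x}) ∧
    ¬ IsLAHypergroupoid circ2 := by
  refine ⟨key, ⟨c, d, b, key⟩, fun hLA => key (hLA c d b)⟩
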